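/- Let X : Fin N → ℝ³ be a point cloud, 1 ≤ k ≤ N, and let q ∈ ℝ³ be a query point whose nearest point in X is unique, i.e. there is a unique index c ∈ Fin N minimizing ‖q − X i‖ over i ∈ Fin N. Define the query feature f_q(X,q) = q − (1/|N_c^k(X)|)·Σ_{j ∈ N_c^k(X)} X j. Then for every R ∈ SO(3) and T ∈ ℝ³: (i) the unique nearest point of R·q + T in the point cloud L_{(R,T)}[X] has the same index c, and (ii) the query feature transforms as a type-1 vector: f_{R·q+T}(L_{(R,T)}[X], R·q + T) = R·f_q(X,q). -/

import Mathlib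

open Matrix

noncomputable section

/-- `SO(3)`: real 3×3 orthogonal matrices of determinant 1. -/
abbrev SO3 := Matrix.specialOrthogonalGroup (Fin 3) ℝ

noncomputable instance : Group SO3 :=
  { (inferInstance : Monoid SO3) with
    inv := fun A => ⟨star A.1, ⟨Unitary.star_mem A.2.1, by
      have h : (star A.1).det = star (A.1.det) := by
        rw [Matrix.star_eq_conjTranspose, Matrix.det_conjTranspose]
      have h2 : A.1.det = 1 := A.2.2
      simpa [MonoidHom.mem_mker, h2] using h⟩⟩
    inv_mul_cancel := fun A => Subtype.ext A.2.1.1 }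

/-- Euclidean 3-space. -/
abbrev V3 := EuclideanSpace ℝ (Fin 3)

/-- Matrix-vector multiplication on Euclidean 3-space. -/
def mv (M : Matrix (Fin 3) (Fin 3) ℝ) (v : V3) : V3 :=
  (WithLp.equiv 2 (Fin 3 → ℝ)).symm (M *ᵥ (WithLp.equiv 2 (Fin 3 → ℝ) v))

/-- Roto-translation action `L_{(R,T)}` on point clouds: `(L_{(R,T)}[X]) i = R·(X i) + T`. -/
def rt {N : ℕ} (R : SO3) (T : V3) (X : Fin N → V3) : Fin N → V3 :=
  fun i => mv (R : Matrix (Fin 3) (Fin 3) ℝ) (X i) + T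

open scoped Classical in
/-- `d_k(X,i)`: the k-th smallest distance from `X i` to points of `X`. -/
def dk {N : ℕ} (X : Fin N → V3) (i : Fin N) (k : ℕ) : ℝ :=
  sInf { d : ℝ | k ≤ (Finset.univ.filter (fun j => ‖X i - X j‖ ≤ d)).card }

open scoped Classical in
/-- `N_i^k(X)`: the k-nearest-neighbor neighborhood of point `i` (including ties). -/
def nbhd {N : ℕ} (X : Fin N → V3) (i : Fin N) (k : ℕ) : Finset (Fin N) :=
  Finset.univ.filter (fun j => ‖X i - X j‖ ≤ dk X i k)

/-- The query feature `f_q(X,q) = q − (1/|N_c^k(X)|)·Σ_{j ∈ N_c^k(X)} X j`,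
where `c` is the (unique) nearest point of `q` in `X`. -/
def qfeat {N : ℕ} (X : Fin N → V3) (q : V3) (c : Fin N) (k : ℕ) : V3 :=
  q - ((nbhd X c k).card : ℝ)⁻¹ • ∑ j ∈ nbhd X c k, X j

lemma mv_sub (M : Matrix (Fin 3) (Fin 3) ℝ) (a b : V3) : mv M (a - b) = mv M a - mv M b := by
  simp [mv, Matrix.mulVec_sub]

lemma mv_smul (M : Matrix (Fin 3) (Fin 3) ℝ) (r : ℝ) (a : V3) : mv M (r • a) = r • mv M a := by
  simp [mv, Matrix.mulVec_smul]

lemma mv_add (M : Matrix (Fin 3) (Fin 3) ℝ) (a b : V3) : mv M (a + b) = mv M a + mv M b := by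
  simp [mv, Matrix.mulVec_add]

lemma mv_norm (R : SO3) (v : V3) : ‖mv (R : Matrix (Fin 3) (Fin 3) ℝ) v‖ = ‖v‖ := by
  have h : ((R : Matrix (Fin 3) (Fin 3) ℝ))ᵀ * (R : Matrix (Fin 3) (Fin 3) ℝ) = 1 := by
    have := R.2.1.1
    rwa [Matrix.star_eq_conjTranspose, Matrix.conjTranspose_eq_transpose_of_trivial] at this
  have key : ∀ x : Fin 3 → ℝ,
      ((R : Matrix (Fin 3) (Fin 3) ℝ) *ᵥ x) ⬝ᵥ ((R : Matrix (Fin 3) (Fin 3) ℝ) *ᵥ x) = x ⬝ᵥ x := by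
    intro x
    rw [Matrix.dotProduct_mulVec, Matrix.vecMul_mulVec, h, Matrix.vecMul_one]
  have hd : ∀ u : Fin 3 → ℝ, ∑ i, ‖u i‖ ^ 2 = u ⬝ᵥ u := by
    intro u
    simp [dotProduct, Real.norm_eq_abs, sq_abs, sq]
  rw [EuclideanSpace.norm_eq, EuclideanSpace.norm_eq]
  congr 1
  have hcomp : ∀ i, (mv (R : Matrix (Fin 3) (Fin 3) ℝ) v) i
      = ((R : Matrix (Fin 3) (Fin 3) ℝ) *ᵥ (WithLp.equiv 2 (Fin 3 → ℝ) v)) i := fun i => rfl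
  calc ∑ i, ‖(mv (R : Matrix (Fin 3) (Fin 3) ℝ) v) i‖ ^ 2
      = ∑ i, ‖((R : Matrix (Fin 3) (Fin 3) ℝ) *ᵥ (WithLp.equiv 2 (Fin 3 → ℝ) v)) i‖ ^ 2 := by
        simp [hcomp]
    _ = (WithLp.equiv 2 (Fin 3 → ℝ) v) ⬝ᵥ (WithLp.equiv 2 (Fin 3 → ℝ) v) := by rw [hd, key]
    _ = ∑ i, ‖v i‖ ^ 2 := (hd _).symm

/-- if `c` is the unique nearest point of the query `q` in `X`, then after
any roto-translation (i) `c` is still the unique nearest point of `R·q + T` in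
`L_{(R,T)}[X]`, and (ii) the query feature transforms as a type-1 vector. -/
theorem qfeat_equivariant (N : ℕ) (X : Fin N → V3) (k : ℕ) (hk1 : 1 ≤ k) (hkN : k ≤ N)
    (q : V3) (c : Fin N) (hc : ∀ i : Fin N, i ≠ c → ‖q - X c‖ < ‖q - X i‖)
    (R : SO3) (T : V3) :
    (∀ i : Fin N, i ≠ c →
      ‖(mv (R : Matrix (Fin 3) (Fin 3) ℝ) q + T) - rt R T X c‖ <
        ‖(mv (R : Matrix (Fin 3) (Fin 3) ℝ) q + T) - rt R T X i‖) ∧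
    qfeat (rt R T X) (mv (R : Matrix (Fin 3) (Fin 3) ℝ) q + T) c k =
      mv (R : Matrix (Fin 3) (Fin 3) ℝ) (qfeat X q c k) := by
  set M : Matrix (Fin 3) (Fin 3) ℝ := (R : Matrix (Fin 3) (Fin 3) ℝ) with hM
  have hq : ∀ i : Fin N, (mv M q + T) - rt R T X i = mv M (q - X i) := by
    intro i
    rw [mv_sub]
    simp [rt]; rfl
  have hnr : ∀ i j : Fin N, ‖rt R T X i - rt R T X j‖ = ‖X i - X j‖ := by
    intro i j
    have : rt R T X i - rt R T X j = mv M (X i - X j) := by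
      rw [mv_sub]; simp [rt]; rfl
    rw [this, mv_norm]
  constructor
  · intro i hi
    rw [hq i, hq c, mv_norm, mv_norm]
    exact hc i hi
  · have hdk : dk (rt R T X) c k = dk X c k := by
      unfold dk
      simp only [hnr]
    have hnb : nbhd (rt R T X) c k = nbhd X c k := by
      unfold nbhd
      rw [hdk]
      simp only [hnr]
    have hdk0 : 0 ≤ dk X c k := by
      apply Real.sInf_nonneg
      intro d hd
      by_contra hlt
      push_neg at hlt
      have hemp : (Finset.univ.filter (fun j => ‖X c - X j‖ ≤ d)) = ∅ := by
        apply Finset.filter_false_of_mem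
        intro j _
        intro hle
        exact absurd (le_trans (norm_nonneg _) hle) (not_le.mpr hlt)
      simp only [Set.mem_setOf_eq, hemp, Finset.card_empty] at hd
      omega
    have hmem : c ∈ nbhd X c k := by
      simp [nbhd, hdk0]
    have hcard : (0 : ℝ) < ((nbhd X c k).card : ℝ) := by
      exact_mod_cast Finset.card_pos.mpr ⟨c, hmem⟩
    set s := nbhd X c k with hs
    have hsum : ∑ j ∈ s, rt R T X j = mv M (∑ j ∈ s, X j) + s.card • T := by
      have h1 : ∑ j ∈ s, mv M (X j) = mv M (∑ j ∈ s, X j) :=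
        (map_sum (AddMonoidHom.mk' (mv M) (mv_add M)) X s).symm
      simp [rt, Finset.sum_add_distrib, h1]
      exact h1
    unfold qfeat
    rw [hnb, ← hs, hsum, mv_sub, mv_smul, smul_add]
    have hT : ((s.card : ℝ))⁻¹ • (s.card • T) = T := by
      rw [← Nat.cast_smul_eq_nsmul ℝ, smul_smul, inv_mul_cancel₀ (ne_of_gt hcard), one_smul]
    rw [hT]
    abel
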